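/- Let b > 0 and let X be drawn from the Ising model on the 8-vertex weighted graph H_b with all biases equal to 0. Then for each x ∈ {−1,1}⁴, P[(X_{v₁}, X_{v₂}, X_{v₃}, X_{v₄}) = x] = (1/16)·(1 + δ_b·x₁x₂x₃x₄), where δ_b = sinh⁴(2b)/(2cosh⁴(2b) − sinh⁴(2b)). -/

import Mathlib

open Finset Real
open scoped Classical

noncomputable section

/-- The real spin value (`±1`) of a Boolean configuration entry. -/
def spin (s : Bool) : ℝ := if s then 1 else -1

/-- The unnormalized Ising weight `exp(θ·x + ½ x·Mx)` of a configuration. -/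
def isingWt {n : ℕ} (M : Matrix (Fin n) (Fin n) ℝ) (θ : Fin n → ℝ) (σ : Fin n → Bool) : ℝ :=
  Real.exp ((∑ i, θ i * spin (σ i)) + (1 / 2) * ∑ i, ∑ j, spin (σ i) * M i j * spin (σ j))

/-- The Ising probability of a single configuration. -/
def isingProb {n : ℕ} (M : Matrix (Fin n) (Fin n) ℝ) (θ : Fin n → ℝ) (σ : Fin n → Bool) : ℝ :=
  isingWt M θ σ / ∑ τ : Fin n → Bool, isingWt M θ τ

/-- The Ising probability of an event `A`. -/
def isingPr {n : ℕ} (M : Matrix (Fin n) (Fin n) ℝ) (θ : Fin n → ℝ)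
    (A : (Fin n → Bool) → Prop) : ℝ :=
  ∑ σ ∈ Finset.univ.filter (fun σ => A σ), isingProb M θ σ

/-- The Ising conditional probability `P[A | B]`. -/
def isingCond {n : ℕ} (M : Matrix (Fin n) (Fin n) ℝ) (θ : Fin n → ℝ)
    (A B : (Fin n → Bool) → Prop) : ℝ :=
  isingPr M θ (fun σ => A σ ∧ B σ) / isingPr M θ B

/-- The weighted adjacency matrix of the parity gadget `H_b`: vertices `0,1,2,3` are
`v₁,v₂,v₃,v₄` and vertices `4,5,6,7` are `u₁,u₂,u₃,u₄`; there is an edge of weight `b` between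
`v_i` and `u_i` and of weight `-b` between `v_i` and `u_j` for `j ≠ i`. -/
def Hb (b : ℝ) : Matrix (Fin 8) (Fin 8) ℝ :=
  !![0, 0, 0, 0,  b, -b, -b, -b;
     0, 0, 0, 0, -b,  b, -b, -b;
     0, 0, 0, 0, -b, -b,  b, -b;
     0, 0, 0, 0, -b, -b, -b,  b;
      b, -b, -b, -b, 0, 0, 0, 0;
     -b,  b, -b, -b, 0, 0, 0, 0;
     -b, -b,  b, -b, 0, 0, 0, 0;
     -b, -b, -b,  b, 0, 0, 0, 0]

/-- `δ_b = sinh⁴(2b)/(2cosh⁴(2b) − sinh⁴(2b))`. -/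
def deltab (b : ℝ) : ℝ :=
  Real.sinh (2 * b) ^ 4 / (2 * Real.cosh (2 * b) ^ 4 - Real.sinh (2 * b) ^ 4)

lemma sum_pi_bool_succ {n : ℕ} (f : (Fin (n+1) → Bool) → ℝ) :
    ∑ σ : Fin (n+1) → Bool, f σ
      = (∑ σ : Fin n → Bool, f (Matrix.vecCons false σ))
        + ∑ σ : Fin n → Bool, f (Matrix.vecCons true σ) := by
  rw [← Equiv.sum_comp (Fin.consEquiv fun _ => Bool) f, Fintype.sum_prod_type, Fintype.sum_bool]
  simp [Fin.consEquiv, Matrix.vecCons, add_comm]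

lemma sum_pi_bool_zero (f : (Fin 0 → Bool) → ℝ) :
    ∑ σ : Fin 0 → Bool, f σ = f ![] := by
  rw [Fintype.sum_unique]
  congr 1

set_option maxHeartbeats 1000000 in
lemma wt_val (b : ℝ) (b0 b1 b2 b3 b4 b5 b6 b7 : Bool) :
    isingWt (Hb b) (fun _ => 0) ![b0,b1,b2,b3,b4,b5,b6,b7]
      = Real.exp (b * (spin b0 * spin b4 + spin b1 * spin b5 + spin b2 * spin b6
          + spin b3 * spin b7
          - spin b0 * spin b5 - spin b0 * spin b6 - spin b0 * spin b7
          - spin b1 * spin b4 - spin b1 * spin b6 - spin b1 * spin b7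
          - spin b2 * spin b4 - spin b2 * spin b5 - spin b2 * spin b7
          - spin b3 * spin b4 - spin b3 * spin b5 - spin b3 * spin b6)) := by
  simp only [isingWt, Hb, Fin.sum_univ_succ, Finset.sum_empty, Fin.sum_univ_zero,
    Matrix.cons_val_zero, Matrix.cons_val_succ, Matrix.cons_val', Matrix.cons_val_fin_one,
    Matrix.empty_val', Matrix.of_apply, Matrix.cons_val_one, Matrix.head_cons,
    Matrix.head_fin_const]
  ring_nf

set_option maxHeartbeats 4000000 in
lemma Z_val (b : ℝ) :
    ∑ τ : Fin 8 → Bool, isingWt (Hb b) (fun _ => 0) τ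
      = 8 * Real.exp (8*b) + 96 * Real.exp (4*b) + 48
        + 96 * Real.exp (-(4*b)) + 8 * Real.exp (-(8*b)) := by
  simp only [sum_pi_bool_succ, sum_pi_bool_zero, wt_val, spin]
  norm_num
  ring_nf

set_option maxHeartbeats 8000000 in
lemma N_val (b : ℝ) (a0 a1 a2 a3 : Bool) :
    ∑ σ : Fin 8 → Bool, (if σ 0 = a0 ∧ σ 1 = a1 ∧ σ 2 = a2 ∧ σ 3 = a3
        then isingWt (Hb b) (fun _ => 0) σ else 0)
      = (1 + spin a0 * spin a1 * spin a2 * spin a3) / 2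
          * (Real.exp (8*b) + 4 * Real.exp (4*b) + 6 + 4 * Real.exp (-(4*b))
              + Real.exp (-(8*b)))
        + (1 - spin a0 * spin a1 * spin a2 * spin a3) / 2
          * (8 * Real.exp (4*b) + 8 * Real.exp (-(4*b))) := by
  cases a0 <;> cases a1 <;> cases a2 <;> cases a3 <;>
    · simp only [sum_pi_bool_succ, sum_pi_bool_zero]
      norm_num [Matrix.cons_val_zero, Matrix.cons_val_one, Matrix.head_cons,
        Matrix.cons_val_succ, Matrix.cons_val_two, Matrix.cons_val_three, spin]
      simp only [wt_val, spin]
      norm_num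
      ring_nf

lemma cond_iff (σ : Fin 8 → Bool) (x : Fin 4 → Bool) :
    (∀ i : Fin 4, σ (Fin.castLE (by norm_num) i) = x i)
      ↔ σ 0 = x 0 ∧ σ 1 = x 1 ∧ σ 2 = x 2 ∧ σ 3 = x 3 := by
  constructor
  · intro h; exact ⟨h 0, h 1, h 2, h 3⟩
  · rintro ⟨h0, h1, h2, h3⟩ i
    fin_cases i <;> assumption

/-- For the Ising model on `H_b` with zero biases, the marginal law of
`(X_{v₁},X_{v₂},X_{v₃},X_{v₄})` is `x ↦ (1/16)(1 + δ_b·x₁x₂x₃x₄)`. -/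
theorem stmt7 (b : ℝ) (hb : 0 < b) (x : Fin 4 → Bool) :
    isingPr (Hb b) (fun _ => 0)
        (fun σ => ∀ i : Fin 4, σ (Fin.castLE (by norm_num) i) = x i) =
      (1 / 16) * (1 + deltab b * ∏ i : Fin 4, spin (x i)) := by
  have hD : 0 < 2 * Real.cosh (2*b) ^ 4 - Real.sinh (2*b) ^ 4 := by
    nlinarith [Real.cosh_sq (2*b), sq_nonneg (Real.sinh (2*b) ^ 2),
      sq_nonneg (Real.sinh (2*b))]
  have ite_div' : ∀ (c : Prop) [Decidable c] (w z : ℝ),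
      (if c then w / z else 0) = (if c then w else 0) / z := by
    intro c _ w z; split <;> simp
  rw [isingPr, Finset.sum_filter]
  simp only [isingProb, cond_iff, ite_div']
  rw [← Finset.sum_div, N_val, Z_val, deltab, Fin.prod_univ_four]
  have h2 : Real.exp (2*b) ≠ 0 := Real.exp_ne_zero _
  have hsinh : Real.sinh (2*b) = (Real.exp (2*b) - (Real.exp (2*b))⁻¹) / 2 := by
    rw [Real.sinh_eq, Real.exp_neg]
  have hcosh : Real.cosh (2*b) = (Real.exp (2*b) + (Real.exp (2*b))⁻¹) / 2 := by
    rw [Real.cosh_eq, Real.exp_neg]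
  have he4 : Real.exp (4*b) = Real.exp (2*b) ^ 2 := by
    rw [← Real.exp_nat_mul]; norm_num; ring_nf
  have he8 : Real.exp (8*b) = Real.exp (2*b) ^ 4 := by
    rw [← Real.exp_nat_mul]; norm_num; ring_nf
  have hne4 : Real.exp (-(4*b)) = (Real.exp (2*b) ^ 2)⁻¹ := by
    rw [Real.exp_neg, he4]
  have hne8 : Real.exp (-(8*b)) = (Real.exp (2*b) ^ 4)⁻¹ := by
    rw [Real.exp_neg, he8]
  rw [hsinh, hcosh] at hD ⊢
  rw [he4, he8, hne4, hne8]
  have hZ : (0:ℝ) < 8 * Real.exp (2*b) ^ 4 + 96 * Real.exp (2*b) ^ 2 + 48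
      + 96 * (Real.exp (2*b) ^ 2)⁻¹ + 8 * (Real.exp (2*b) ^ 4)⁻¹ := by positivity
  field_simp
  ring_nf
  field_simp [hD.ne', hZ.ne']
  ring
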